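/- ∂_x^N [ (x-1)^{M+L-N-1} / x^{M-N+1} ] = (M!/(M-N)!) · (x-1)^{M+L-2N-1} x^{-M-1} · ₂F₁(-N, L-N-1; -M; x), for integers 0 ≤ N ≤ M and x ∉ {0}. -/

import Mathlib

open Finset Polynomial



/-- falling factorial of a real number -/
noncomputable def ffr (a : ℝ) (n : ℕ) : ℝ := ∏ i ∈ range n, (a - i)

lemma ffr_zero (a : ℝ) : ffr a 0 = 1 := by simp [ffr]

lemma ffr_succ (a : ℝ) (n : ℕ) : ffr a (n+1) = ffr a n * (a - n) := by
  simp [ffr, prod_range_succ]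

lemma ffr_add (a : ℝ) (p q : ℕ) : ffr a (p + q) = ffr a p * ffr (a - p) q := by
  induction q with
  | zero => simp [ffr_zero]
  | succ q ih =>
      rw [← Nat.add_assoc, ffr_succ, ih, ffr_succ, mul_assoc]
      congr 1
      push_cast
      ring_nf

lemma pascal_sum (n : ℕ) (f g : ℕ → ℝ) :
    ∑ k ∈ range (n+2), ((n+1).choose k : ℝ) * f k * g ((n+1)-k)
      = (∑ k ∈ range (n+1), (n.choose k : ℝ) * f (k+1) * g (n-k))
        + ∑ k ∈ range (n+1), (n.choose k : ℝ) * f k * g ((n+1)-k) := by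
  have h1 : ∑ k ∈ range (n+2), ((n+1).choose k : ℝ) * f k * g ((n+1)-k)
      = (∑ k ∈ range (n+1), ((n+1).choose (k+1) : ℝ) * f (k+1) * g (n-k))
        + ((n+1).choose 0 : ℝ) * f 0 * g (n+1) := by
    rw [Finset.sum_range_succ']
    simp [Nat.succ_sub_succ_eq_sub]
  have h2 : ∑ k ∈ range (n+2), (n.choose k : ℝ) * f k * g ((n+1)-k)
      = (∑ k ∈ range (n+1), (n.choose (k+1) : ℝ) * f (k+1) * g (n-k))
        + (n.choose 0 : ℝ) * f 0 * g (n+1) := by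
    rw [Finset.sum_range_succ']
    simp [Nat.succ_sub_succ_eq_sub]
  have h3 : ∑ k ∈ range (n+2), (n.choose k : ℝ) * f k * g ((n+1)-k)
      = ∑ k ∈ range (n+1), (n.choose k : ℝ) * f k * g ((n+1)-k) := by
    rw [Finset.sum_range_succ, Nat.choose_succ_self]
    simp
  rw [h1, ← h3, h2]
  have : ∀ k ∈ range (n+1), ((n+1).choose (k+1) : ℝ) * f (k+1) * g (n-k)
      = (n.choose k : ℝ) * f (k+1) * g (n-k) + (n.choose (k+1) : ℝ) * f (k+1) * g (n-k) := by
    intro k _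
    rw [Nat.choose_succ_succ]
    push_cast
    ring
  rw [Finset.sum_congr rfl this, Finset.sum_add_distrib]
  simp only [Nat.choose_zero_right, Nat.cast_one]
  ring

lemma vandermonde (n : ℕ) (a b : ℝ) :
    ffr (a+b) n = ∑ k ∈ range (n+1), (n.choose k : ℝ) * ffr a k * ffr b (n-k) := by
  induction n generalizing b with
  | zero => simp [ffr]
  | succ n ih =>
      rw [ffr_succ, ih]
      rw [show n + 1 + 1 = n + 2 from rfl, pascal_sum n (fun k => ffr a k) (fun j => ffr b j)]
      rw [Finset.sum_mul]
      have : ∀ k ∈ range (n+1),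
          (n.choose k : ℝ) * ffr a k * ffr b (n-k) * (a + b - n)
          = (n.choose k : ℝ) * ffr a (k+1) * ffr b (n-k)
            + (n.choose k : ℝ) * ffr a k * ffr b ((n+1)-k) := by
        intro k hk
        have hk' : k ≤ n := by simpa using Nat.lt_succ_iff.mp (mem_range.mp hk)
        have h1 : ffr a (k+1) = ffr a k * (a - k) := ffr_succ a k
        have h2 : ffr b ((n+1)-k) = ffr b (n-k) * (b - (n-k : ℕ)) := by
          rw [show (n+1) - k = (n-k) + 1 by omega, ffr_succ]
        rw [h1, h2]
        have hc : ((n - k : ℕ) : ℝ) = (n : ℝ) - k := by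
          push_cast [Nat.cast_sub hk']; ring
        rw [hc]
        ring
      rw [Finset.sum_congr rfl this, Finset.sum_add_distrib]



lemma asc_eval_prod (a : ℝ) (n : ℕ) :
    (ascPochhammer ℝ n).eval a = ∏ i ∈ range n, (a + i) := by
  induction n with
  | zero => simp [ascPochhammer]
  | succ n ih =>
      rw [ascPochhammer_succ_right, prod_range_succ, ← ih]
      simp [Polynomial.eval_mul]

lemma ffr_neg (a : ℝ) (n : ℕ) :
    ffr (-a) n = (-1)^n * (ascPochhammer ℝ n).eval a := by
  rw [asc_eval_prod, ffr, show ((-1:ℝ))^n = ∏ _i ∈ range n, (-1:ℝ) by simp, ← prod_mul_distrib]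
  exact prod_congr rfl fun i _ => by ring

lemma asc_neg (a : ℝ) (n : ℕ) :
    (ascPochhammer ℝ n).eval (-a) = (-1)^n * ffr a n := by
  rw [asc_eval_prod, ffr, show ((-1:ℝ))^n = ∏ _i ∈ range n, (-1:ℝ) by simp, ← prod_mul_distrib]
  exact prod_congr rfl fun i _ => by ring

lemma asc_eq_ffr (a : ℝ) (n : ℕ) :
    (ascPochhammer ℝ n).eval a = ffr (a + n - 1) n := by
  rw [asc_eval_prod, ffr]
  rw [← Finset.prod_range_reflect (fun j => a + n - 1 - j) n]
  refine prod_congr rfl fun i hi => ?_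
  have hi' : i < n := mem_range.mp hi
  have : ((n - 1 - i : ℕ) : ℝ) = (n : ℝ) - 1 - i := by
    have h1 : i ≤ n - 1 := by omega
    rw [Nat.cast_sub h1, Nat.cast_sub (by omega : (1:ℕ) ≤ n)]
    push_cast; ring
  rw [this]; ring

lemma ffr_nat (p n : ℕ) (h : n ≤ p) :
    ffr (p : ℝ) n = (p.factorial : ℝ) / ((p - n).factorial : ℝ) := by
  induction n with
  | zero => simp [ffr]; rw [div_self (by positivity)]
  | succ n ih =>
      have hn : n ≤ p := by omega
      rw [show ffr (p:ℝ) (n+1) = ffr (p:ℝ) n * ((p:ℝ) - n) by simp [ffr, prod_range_succ]]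
      rw [ih hn]
      have h1 : p - n = (p - (n+1)) + 1 := by omega
      have h2 : ((p - n : ℕ) : ℝ) = (p : ℝ) - n := by rw [Nat.cast_sub hn]
      rw [h1, Nat.factorial_succ]
      have h3 : ((p - (n+1) : ℕ) : ℝ) + 1 = (p : ℝ) - n := by
        have := h2
        rw [h1] at this
        push_cast at this
        linarith
      push_cast
      rw [h3]
      have hne : ((p - (n+1)).factorial : ℝ) ≠ 0 := by positivity
      have hne2 : (p:ℝ) - n ≠ 0 := by
        have : ((p - n : ℕ) : ℝ) ≠ 0 := by
          simp only [ne_eq, Nat.cast_eq_zero]; omega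
        rwa [h2] at this
      field_simp

lemma key (L M N n : ℕ) (hn : n ≤ N) (hNM : N ≤ M) (x : ℝ) :
    ∑ k ∈ range (n+1), (N.choose k : ℝ) * ffr ((M:ℝ)+L-N-1) k * ffr ((N:ℝ)-M-1) (N-k)
        * ((N-k).choose (n-k) : ℝ) * ((-1:ℝ))^(N-n) * x^n
    = (M.factorial : ℝ) / ((M-N).factorial : ℝ) *
        ((ascPochhammer ℝ n).eval (-(N:ℝ)) * (ascPochhammer ℝ n).eval ((L:ℝ)-N-1) /
          (ascPochhammer ℝ n).eval (-(M:ℝ)) * x^n / (n.factorial : ℝ)) := by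
  have hnM : n ≤ M := hn.trans hNM
  have hsplit : ∀ k ∈ range (n+1),
      (N.choose k : ℝ) * ffr ((M:ℝ)+L-N-1) k * ffr ((N:ℝ)-M-1) (N-k)
        * ((N-k).choose (n-k) : ℝ) * ((-1:ℝ))^(N-n) * x^n
      = ((n.choose k : ℝ) * ffr ((M:ℝ)+L-N-1) k * ffr ((n:ℝ)-M-1) (n-k))
          * ((N.choose n : ℝ) * (ffr ((N:ℝ)-M-1) (N-n) * ((-1:ℝ))^(N-n)) * x^n) := by
    intro k hk
    have hk' : k ≤ n := Nat.lt_succ_iff.mp (mem_range.mp hk)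
    have hcc : (N.choose k : ℝ) * ((N-k).choose (n-k) : ℝ)
        = (N.choose n : ℝ) * (n.choose k : ℝ) := by
      exact_mod_cast congrArg (Nat.cast (R := ℝ)) (Nat.choose_mul (n := N) hk').symm
    have hff : ffr ((N:ℝ)-M-1) (N-k)
        = ffr ((N:ℝ)-M-1) (N-n) * ffr ((n:ℝ)-M-1) (n-k) := by
      rw [show N-k = (N-n)+(n-k) by omega, ffr_add]
      congr 2
      rw [Nat.cast_sub hn]; ring
    rw [hff]
    linear_combination (ffr ((M:ℝ)+L-N-1) k * ffr ((N:ℝ)-M-1) (N-n)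
      * ffr ((n:ℝ)-M-1) (n-k) * ((-1:ℝ))^(N-n) * x^n) * hcc
  rw [Finset.sum_congr rfl hsplit, ← Finset.sum_mul,
    ← vandermonde n ((M:ℝ)+L-N-1) ((n:ℝ)-M-1)]
  have hA : ffr ((M:ℝ)+L-N-1 + ((n:ℝ)-M-1)) n = (ascPochhammer ℝ n).eval ((L:ℝ)-N-1) := by
    rw [asc_eq_ffr]; congr 1; ring
  have hB : ffr ((N:ℝ)-M-1) (N-n) * ((-1:ℝ))^(N-n)
      = ((M-n).factorial : ℝ) / ((M-N).factorial : ℝ) := by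
    have e1 : (N:ℝ)-M-1 = -((M:ℝ)+1-N) := by ring
    rw [e1, ffr_neg, asc_eq_ffr]
    have e2 : (M:ℝ)+1-N + ((N-n:ℕ):ℝ) - 1 = ((M-n:ℕ):ℝ) := by
      rw [Nat.cast_sub hn, Nat.cast_sub hnM]; ring
    rw [e2, ffr_nat (M-n) (N-n) (by omega), show M-n-(N-n) = M-N by omega]
    have hs : ((-1:ℝ))^(N-n) * ((-1:ℝ))^(N-n) = 1 := by rw [← mul_pow]; norm_num
    linear_combination (((M-n).factorial : ℝ) / ((M-N).factorial : ℝ)) * hs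
  have hNdiv : (ascPochhammer ℝ n).eval (-(N:ℝ)) / (ascPochhammer ℝ n).eval (-(M:ℝ))
      = ((N.factorial : ℝ)/((N-n).factorial : ℝ)) / ((M.factorial : ℝ)/((M-n).factorial : ℝ)) := by
    rw [asc_neg, asc_neg, ffr_nat N n hn, ffr_nat M n hnM,
      mul_div_mul_left _ _ (pow_ne_zero _ (by norm_num : (-1:ℝ) ≠ 0))]
  have hre : (ascPochhammer ℝ n).eval (-(N:ℝ)) * (ascPochhammer ℝ n).eval ((L:ℝ)-N-1) /
        (ascPochhammer ℝ n).eval (-(M:ℝ))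
      = (ascPochhammer ℝ n).eval ((L:ℝ)-N-1) *
          ((ascPochhammer ℝ n).eval (-(N:ℝ)) / (ascPochhammer ℝ n).eval (-(M:ℝ))) := by
    ring
  rw [hre, hNdiv, hA, hB, Nat.cast_choose (K := ℝ) hn]
  have f1 : ((N-n).factorial : ℝ) ≠ 0 := by positivity
  have f2 : ((M-n).factorial : ℝ) ≠ 0 := by positivity
  have f3 : ((M-N).factorial : ℝ) ≠ 0 := by positivity
  have f4 : ((n).factorial : ℝ) ≠ 0 := by positivity
  have f5 : ((M).factorial : ℝ) ≠ 0 := by positivity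
  field_simp

lemma iter_formula (a b : ℤ) (n : ℕ) :
    ∀ (x : ℝ), x ≠ 0 → x ≠ 1 →
    iteratedDeriv n (fun t : ℝ => (t-1)^a * t^b) x
      = ∑ k ∈ range (n+1), (n.choose k : ℝ)
          * (ffr (a:ℝ) k * (x-1)^(a-(k:ℤ)))
          * (ffr (b:ℝ) (n-k) * x^(b-((n-k : ℕ):ℤ))) := by
  induction n with
  | zero =>
      intro x hx0 hx1
      simp [ffr, iteratedDeriv_zero]
  | succ n ih =>
      intro x hx0 hx1
      have hx1' : x - 1 ≠ 0 := sub_ne_zero.mpr hx1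
      have ho : IsOpen {y : ℝ | y ≠ 0 ∧ y ≠ 1} := by
        have : {y : ℝ | y ≠ 0 ∧ y ≠ 1} = ({(0:ℝ)}ᶜ ∩ {(1:ℝ)}ᶜ : Set ℝ) := by
          ext y; simp [Set.mem_compl_iff]
        rw [this]
        exact isOpen_compl_singleton.inter isOpen_compl_singleton
      have hmem : {y : ℝ | y ≠ 0 ∧ y ≠ 1} ∈ nhds x := ho.mem_nhds ⟨hx0, hx1⟩
      have hev : iteratedDeriv n (fun t : ℝ => (t-1)^a * t^b)
          =ᶠ[nhds x] (fun y => ∑ k ∈ range (n+1), (n.choose k : ℝ)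
            * (ffr (a:ℝ) k * (y-1)^(a-(k:ℤ)))
            * (ffr (b:ℝ) (n-k) * y^(b-((n-k : ℕ):ℤ)))) := by
        filter_upwards [hmem] with y hy
        exact ih y hy.1 hy.2
      rw [iteratedDeriv_succ, hev.deriv_eq]
      -- derivative of each term
      have hd : ∀ k ∈ range (n+1), HasDerivAt (fun y : ℝ => (n.choose k : ℝ)
            * (ffr (a:ℝ) k * (y-1)^(a-(k:ℤ)))
            * (ffr (b:ℝ) (n-k) * y^(b-((n-k : ℕ):ℤ))))
          ((n.choose k : ℝ) * (ffr (a:ℝ) k * (((a-(k:ℤ) : ℤ):ℝ) * (x-1)^(a-(k:ℤ)-1)))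
              * (ffr (b:ℝ) (n-k) * x^(b-((n-k : ℕ):ℤ)))
            + (n.choose k : ℝ) * (ffr (a:ℝ) k * (x-1)^(a-(k:ℤ)))
              * (ffr (b:ℝ) (n-k) * (((b-((n-k : ℕ):ℤ) : ℤ):ℝ) * x^(b-((n-k : ℕ):ℤ)-1)))) x := by
        intro k _
        have h0 : HasDerivAt (fun y : ℝ => y - 1) 1 x := (hasDerivAt_id x).sub_const 1
        have h1 : HasDerivAt (fun y : ℝ => (y-1)^(a-(k:ℤ)))
            (((a-(k:ℤ) : ℤ):ℝ) * (x-1)^(a-(k:ℤ)-1)) x := by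
          have h2 := (hasDerivAt_zpow (a-(k:ℤ)) (x-1) (Or.inl hx1')).comp x h0
          simpa [Function.comp_def] using h2
        have h2 : HasDerivAt (fun y : ℝ => y^(b-((n-k : ℕ):ℤ)))
            (((b-((n-k : ℕ):ℤ) : ℤ):ℝ) * x^(b-((n-k : ℕ):ℤ)-1)) x :=
          hasDerivAt_zpow _ x (Or.inl hx0)
        exact ((h1.const_mul (ffr (a:ℝ) k)).const_mul ((n.choose k : ℝ))).mul
          (h2.const_mul (ffr (b:ℝ) (n-k)))
      rw [(HasDerivAt.fun_sum hd).deriv]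
      rw [show n + 1 + 1 = n + 2 from rfl,
        pascal_sum n (fun k => ffr (a:ℝ) k * (x-1)^(a-(k:ℤ)))
          (fun j => ffr (b:ℝ) j * x^(b-(j:ℤ)))]
      rw [← Finset.sum_add_distrib]
      refine Finset.sum_congr rfl fun k hk => ?_
      have hk' : k ≤ n := Nat.lt_succ_iff.mp (mem_range.mp hk)
      have e1 : ffr (a:ℝ) (k+1) = ffr (a:ℝ) k * (((a-(k:ℤ) : ℤ)):ℝ) := by
        rw [ffr_succ]; push_cast; ring
      have e2 : a - ((k+1 : ℕ):ℤ) = a-(k:ℤ)-1 := by push_cast; ring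
      have e3 : ffr (b:ℝ) ((n+1)-k) = ffr (b:ℝ) (n-k) * (((b-((n-k : ℕ):ℤ) : ℤ)):ℝ) := by
        rw [show (n+1)-k = (n-k)+1 by omega, ffr_succ]; push_cast; ring
      have e4 : b - (((n+1)-k : ℕ):ℤ) = b-((n-k : ℕ):ℤ)-1 := by
        rw [show (n+1)-k = (n-k)+1 by omega]; push_cast; ring
      rw [e1, e2, e3, e4]
      ring


open scoped BigOperators

/-- The terminating Gauss hypergeometric polynomial `₂F₁(-N, b; c; x)`. -/
noncomputable def F21term (N : ℕ) (b c x : ℝ) : ℝ :=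
  ∑ k ∈ Finset.range (N + 1),
    (ascPochhammer ℝ k).eval (-(N : ℝ)) * (ascPochhammer ℝ k).eval b /
      (ascPochhammer ℝ k).eval c * x ^ k / (Nat.factorial k : ℝ)

/-- For integers `0 ≤ N ≤ M` and `x ∉ {0,1}`,
`∂_x^N [(x-1)^{M+L-N-1}/x^{M-N+1}]
  = (M!/(M-N)!)·(x-1)^{M+L-2N-1} x^{-M-1}·₂F₁(-N, L-N-1; -M; x)`. -/
theorem iteratedDeriv_formula_A (L M N : ℕ) (hNM : N ≤ M) (x : ℝ)
    (hx0 : x ≠ 0) (hx1 : x ≠ 1) :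
    iteratedDeriv N
        (fun t : ℝ => (t - 1) ^ ((M : ℤ) + L - N - 1) * t ^ (-((M : ℤ) - N + 1))) x
      = ((Nat.factorial M : ℝ) / (Nat.factorial (M - N) : ℝ)) *
          (x - 1) ^ ((M : ℤ) + L - 2 * N - 1) * x ^ (-(M : ℤ) - 1) *
          F21term N ((L : ℝ) - N - 1) (-(M : ℝ)) x := by
  have hx1' : x - 1 ≠ 0 := sub_ne_zero.mpr hx1
  rw [iter_formula ((M:ℤ) + L - N - 1) (-((M:ℤ) - N + 1)) N x hx0 hx1]
  have cA : ((((M:ℤ) + L - N - 1) : ℤ) : ℝ) = (M:ℝ)+L-N-1 := by push_cast; ring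
  have cB : (((-((M:ℤ) - N + 1)) : ℤ) : ℝ) = (N:ℝ)-M-1 := by push_cast; ring
  simp only [cA, cB]
  have hS : ∑ k ∈ range (N+1), (N.choose k : ℝ) * ffr ((M:ℝ)+L-N-1) k
        * ffr ((N:ℝ)-M-1) (N-k) * (x-1)^(N-k) * x^k
      = (M.factorial : ℝ) / ((M-N).factorial : ℝ)
          * F21term N ((L : ℝ) - N - 1) (-(M : ℝ)) x := by
    calc ∑ k ∈ range (N+1), (N.choose k : ℝ) * ffr ((M:ℝ)+L-N-1) k
          * ffr ((N:ℝ)-M-1) (N-k) * (x-1)^(N-k) * x^k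
        = ∑ k ∈ range (N+1), ∑ i ∈ Finset.Ico k (N+1),
            (N.choose k : ℝ) * ffr ((M:ℝ)+L-N-1) k * ffr ((N:ℝ)-M-1) (N-k)
              * x^(i-k) * ((-1:ℝ))^((N-k)-(i-k)) * (((N-k).choose (i-k)) : ℝ) * x^k := by
          refine Finset.sum_congr rfl fun k hk => ?_
          have hk' : k ≤ N := Nat.lt_succ_iff.mp (mem_range.mp hk)
          rw [Finset.sum_Ico_eq_sum_range, show N+1-k = (N-k)+1 by omega]
          rw [sub_eq_add_neg x 1, add_pow]
          rw [Finset.mul_sum, Finset.sum_mul]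
          refine Finset.sum_congr rfl fun j hj => ?_
          simp only [Nat.add_sub_cancel_left]
          ring
      _ = ∑ i ∈ range (N+1), ∑ k ∈ range (i+1),
            (N.choose k : ℝ) * ffr ((M:ℝ)+L-N-1) k * ffr ((N:ℝ)-M-1) (N-k)
              * x^(i-k) * ((-1:ℝ))^((N-k)-(i-k)) * (((N-k).choose (i-k)) : ℝ) * x^k := by
          rw [Finset.range_eq_Ico, Finset.sum_Ico_Ico_comm]
          simp only [Finset.range_eq_Ico]
      _ = ∑ i ∈ range (N+1), (M.factorial : ℝ) / ((M-N).factorial : ℝ) *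
            ((ascPochhammer ℝ i).eval (-(N:ℝ)) * (ascPochhammer ℝ i).eval ((L:ℝ)-N-1) /
              (ascPochhammer ℝ i).eval (-(M:ℝ)) * x^i / (i.factorial : ℝ)) := by
          refine Finset.sum_congr rfl fun i hi => ?_
          have hi' : i ≤ N := Nat.lt_succ_iff.mp (mem_range.mp hi)
          rw [← key L M N i hi' hNM x]
          refine Finset.sum_congr rfl fun k hk => ?_
          have hk' : k ≤ i := Nat.lt_succ_iff.mp (mem_range.mp hk)
          rw [show (N-k)-(i-k) = N-i by omega]
          have hx' : (x:ℝ)^(i-k) * x^k = x^i := by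
            rw [← pow_add]; congr 1; omega
          linear_combination ((N.choose k:ℝ) * ffr ((M:ℝ)+L-N-1) k
            * ffr ((N:ℝ)-M-1) (N-k) * ((-1:ℝ))^(N-i) * (((N-k).choose (i-k)):ℝ)) * hx'
      _ = (M.factorial : ℝ) / ((M-N).factorial : ℝ)
            * F21term N ((L : ℝ) - N - 1) (-(M : ℝ)) x := by
          rw [F21term, Finset.mul_sum]
  calc ∑ k ∈ range (N+1), (N.choose k : ℝ)
        * (ffr ((M:ℝ)+L-N-1) k * (x-1)^((M:ℤ) + L - N - 1 - (k:ℤ)))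
        * (ffr ((N:ℝ)-M-1) (N-k) * x^((-((M:ℤ) - N + 1))-((N-k : ℕ):ℤ)))
      = ∑ k ∈ range (N+1), (x-1)^((M:ℤ) + L - 2*N - 1) * x^(-(M:ℤ)-1) *
          ((N.choose k : ℝ) * ffr ((M:ℝ)+L-N-1) k
            * ffr ((N:ℝ)-M-1) (N-k) * (x-1)^(N-k) * x^k) := by
        refine Finset.sum_congr rfl fun k hk => ?_
        have hk' : k ≤ N := Nat.lt_succ_iff.mp (mem_range.mp hk)
        have e1 : (M:ℤ) + L - N - 1 - (k:ℤ) = ((M:ℤ) + L - 2*N - 1) + ((N-k : ℕ):ℤ) := by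
          omega
        have e2 : (-((M:ℤ) - N + 1))-((N-k : ℕ):ℤ) = (-(M:ℤ)-1) + (k:ℤ) := by
          omega
        rw [e1, e2, zpow_add₀ hx1', zpow_add₀ hx0, zpow_natCast, zpow_natCast]
        ring
    _ = (x-1)^((M:ℤ) + L - 2*N - 1) * x^(-(M:ℤ)-1) *
          ∑ k ∈ range (N+1), ((N.choose k : ℝ) * ffr ((M:ℝ)+L-N-1) k
            * ffr ((N:ℝ)-M-1) (N-k) * (x-1)^(N-k) * x^k) := by
        rw [Finset.mul_sum]
    _ = ((Nat.factorial M : ℝ) / (Nat.factorial (M - N) : ℝ)) *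
          (x - 1) ^ ((M : ℤ) + L - 2 * N - 1) * x ^ (-(M : ℤ) - 1) *
          F21term N ((L : ℝ) - N - 1) (-(M : ℝ)) x := by
        rw [hS]; ring
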